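/- Let p_j denote the j-th prime number in increasing order (p_1 = 2, p_2 = 3, …). Let n ≥ 1 be an integer, let J : ℕ → {1,2,3,…} be a function each of whose fibers J^{−1}(j) has at most n elements, and let d : ℕ → {1,2,3,…}. Define N(k) = p_{J(k)}^{d(k)}. Suppose the set D = {j : there exists k with J(k) = j and d(k) = 1} has positive lower natural density, i.e. liminf_{ν→∞} #(D ∩ {1,…,ν})/ν > 0. Then lim_{s→1⁺} (Σ_{k : d(k) ≥ 2} N(k)^{−s}) / (Σ_{k∈ℕ} N(k)^{−s}) = 0. (For each real s > 1 both series converge, and the denominator tends to infinity as s → 1⁺.) -/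

import Mathlib

/-- The `j`-th prime in increasing order, 1-indexed: `nthPrime 1 = 2`,
`nthPrime 2 = 3`, …  (`Nat.nth Nat.Prime` is 0-indexed). -/
noncomputable def nthPrime (j : ℕ) : ℕ := Nat.nth Nat.Prime (j - 1)


open Filter Set

/-- If `g` has fibers of size at most `n` and `f` is nonnegative summable,
then `f ∘ g` is summable. -/
lemma aux_summable_comp {g : ℕ → ℕ} {n : ℕ}
    (hfib : ∀ j : ℕ, {k : ℕ | g k = j}.Finite ∧ {k : ℕ | g k = j}.ncard ≤ n)
    {f : ℕ → ℝ} (hf0 : ∀ j, 0 ≤ f j) (hf : Summable f) :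
    Summable fun k : ℕ => f (g k) := by
  classical
  apply summable_of_sum_le (c := (n : ℝ) * ∑' j, f j) (fun k => hf0 (g k))
  intro u
  rw [Finset.sum_comp]
  have hcard : ∀ b : ℕ, (({a ∈ u | g a = b} : Finset ℕ).card : ℝ) ≤ n := by
    intro b
    have h1 : (({a ∈ u | g a = b} : Finset ℕ) : Set ℕ) ⊆ {k : ℕ | g k = b} := by
      intro x hx
      simp only [Finset.coe_filter, Set.mem_setOf_eq] at hx ⊢
      exact hx.2
    have := (Set.ncard_le_ncard h1 (hfib b).1).trans (hfib b).2
    rw [Set.ncard_coe_finset] at this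
    exact_mod_cast this
  calc ∑ b ∈ u.image g, ({a ∈ u | g a = b} : Finset ℕ).card • f b
      ≤ ∑ b ∈ u.image g, (n : ℝ) * f b := by
        refine Finset.sum_le_sum fun b _ => ?_
        rw [nsmul_eq_mul]
        exact mul_le_mul_of_nonneg_right (hcard b) (hf0 b)
    _ = (n : ℝ) * ∑ b ∈ u.image g, f b := by rw [Finset.mul_sum]
    _ ≤ (n : ℝ) * ∑' j, f j := by
        refine mul_le_mul_of_nonneg_left ?_ (by positivity)
        exact Summable.sum_le_tsum _ (fun i _ => hf0 i) hf



open Filter Set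

lemma aux_not_summable_nth_inv :
    ¬ Summable fun m : ℕ => ((Nat.nth Nat.Prime m : ℕ) : ℝ)⁻¹ := by
  intro h
  apply Nat.Primes.not_summable_one_div
  have hinj : Function.Injective fun p : Nat.Primes => Nat.count Nat.Prime (p : ℕ) := by
    intro p q hpq
    have := congrArg (Nat.nth Nat.Prime) hpq
    rwa [Nat.nth_count p.prop, Nat.nth_count q.prop, Nat.Primes.coe_nat_inj] at this
  have := h.comp_injective hinj
  convert this using 1
  · rfl
  funext p
  simp [Function.comp, Nat.nth_count p.prop, one_div]

lemma aux_not_summable_nth_mul (C : ℕ) (hC : 1 ≤ C) :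
    ¬ Summable fun m : ℕ => ((Nat.nth Nat.Prime (C * m) : ℕ) : ℝ)⁻¹ := by
  intro h
  apply aux_not_summable_nth_inv
  have hfib : ∀ j : ℕ, {k : ℕ | k / C = j}.Finite ∧ {k : ℕ | k / C = j}.ncard ≤ C := by
    intro j
    have hsub : {k : ℕ | k / C = j} ⊆ Set.Ico (C * j) (C * j + C) := by
      intro q hq
      simp only [Set.mem_setOf_eq] at hq
      have h1 := Nat.div_add_mod q C
      have h2 : q % C < C := Nat.mod_lt _ hC
      rw [hq] at h1
      simp only [Set.mem_Ico]
      omega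
    have hfin : (Set.Ico (C * j) (C * j + C)).Finite := Set.finite_Ico _ _
    refine ⟨hfin.subset hsub, ?_⟩
    calc {k : ℕ | k / C = j}.ncard ≤ (Set.Ico (C * j) (C * j + C)).ncard :=
          Set.ncard_le_ncard hsub hfin
      _ = C := by
          rw [← Finset.coe_Ico, Set.ncard_coe_finset, Nat.card_Ico]; omega
  have h2 : Summable fun q : ℕ => ((Nat.nth Nat.Prime (C * (q / C)) : ℕ) : ℝ)⁻¹ :=
    aux_summable_comp hfib (fun j => by positivity) h
  refine Summable.of_nonneg_of_le (fun q => by positivity) (fun q => ?_) h2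
  have hle : C * (q / C) ≤ q := Nat.mul_div_le q C
  have hmono : Nat.nth Nat.Prime (C * (q / C)) ≤ Nat.nth Nat.Prime q :=
    Nat.nth_monotone Nat.infinite_setOf_prime hle
  have hpos : (0 : ℝ) < ((Nat.nth Nat.Prime (C * (q / C)) : ℕ) : ℝ) := by
    have := (Nat.prime_nth_prime (C * (q / C))).pos
    exact_mod_cast this
  exact one_div_le_one_div_of_le (b := ((Nat.nth Nat.Prime q : ℕ) : ℝ)) hpos (by exact_mod_cast hmono) |>.trans_eq (one_div _) |>.trans_eq' (one_div _)


set_option maxHeartbeats 1000000 in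
lemma aux_density_not_summable {D : Set ℕ}
    (hD : 0 < Filter.liminf
      (fun ν : ℕ => ((D ∩ Set.Icc 1 ν).ncard : ℝ) / ν) Filter.atTop) :
    ¬ Summable fun j : D => ((nthPrime (j : ℕ) : ℕ) : ℝ)⁻¹ := by
  classical
  intro hsum
  set u : ℕ → ℝ := fun ν => ((D ∩ Set.Icc 1 ν).ncard : ℝ) / ν with hu
  have hu0 : ∀ ν, 0 ≤ u ν := fun ν => div_nonneg (by positivity) (by positivity)
  have hcnt : ∀ ν : ℕ, ((D ∩ Set.Icc 1 ν).ncard : ℝ) ≤ ν := by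
    intro ν
    have h1 : (D ∩ Set.Icc 1 ν).ncard ≤ (Set.Icc 1 ν).ncard :=
      Set.ncard_le_ncard Set.inter_subset_right (Set.finite_Icc _ _)
    have h2 : (Set.Icc 1 ν).ncard = ν := by
      rw [← Finset.coe_Icc, Set.ncard_coe_finset, Nat.card_Icc]; omega
    exact_mod_cast h1.trans_eq h2
  -- D is infinite
  have hinf : D.Infinite := by
    by_contra hfin
    rw [Set.not_infinite] at hfin
    have htend : Filter.Tendsto u Filter.atTop (nhds 0) := by
      refine tendsto_of_tendsto_of_tendsto_of_le_of_le' tendsto_const_nhds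
        (tendsto_const_div_atTop_nhds_zero_nat (D.ncard : ℝ))
        (Filter.Eventually.of_forall hu0) (Filter.Eventually.of_forall fun ν => ?_)
      have h1 : ((D ∩ Set.Icc 1 ν).ncard : ℝ) ≤ (D.ncard : ℝ) := by
        exact_mod_cast Set.ncard_le_ncard Set.inter_subset_left hfin
      rcases Nat.eq_zero_or_pos ν with h | h
      · simp [hu, h]
      · exact div_le_div_of_nonneg_right h1 (by positivity)
    rw [htend.liminf_eq] at hD
    exact lt_irrefl 0 hD
  -- a positive lower bound eventually
  have hub : ∀ ν, u ν ≤ 1 := by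
    intro ν
    rcases Nat.eq_zero_or_pos ν with h | h
    · simp [hu, h]
    · exact div_le_one_of_le₀ (hcnt ν) (by positivity)
  have hcb : Filter.IsCoboundedUnder (· ≥ ·) Filter.atTop u :=
    Filter.isCoboundedUnder_ge_of_eventually_le Filter.atTop
      (Filter.Eventually.of_forall hub)
  set L := Filter.liminf u Filter.atTop with hL
  have hbdd : Filter.IsBoundedUnder (· ≥ ·) Filter.atTop u :=
    Filter.isBoundedUnder_of ⟨0, hu0⟩
  have hev : ∀ᶠ ν in Filter.atTop, L / 2 < u ν :=
    Filter.eventually_lt_of_lt_liminf (by linarith) hbdd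
  obtain ⟨ν0, hν0⟩ := Filter.eventually_atTop.mp hev
  -- the enumeration of D
  set E : ℕ → ℕ := Nat.nth (· ∈ D) with hE
  have hinf' : {x | x ∈ D}.Infinite := hinf
  have hEmem : ∀ m, E m ∈ D := fun m => Nat.nth_mem_of_infinite hinf' m
  have hEsm : StrictMono E := Nat.nth_strictMono hinf'
  have hcount : ∀ m : ℕ, ((D ∩ Set.Icc 1 (E m)).ncard : ℝ) ≤ m + 1 := by
    intro m
    have hsub : D ∩ Set.Icc 1 (E m) ⊆ E '' Set.Iic m := by
      rintro x ⟨hxD, _, hxle⟩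
      have hx : E (Nat.count (· ∈ D) x) = x := Nat.nth_count hxD
      refine ⟨Nat.count (· ∈ D) x, ?_, hx⟩
      have h1 : E (Nat.count (· ∈ D) x) ≤ E m := hx.symm ▸ hxle
      exact hEsm.le_iff_le.mp h1
    have h1 := Set.ncard_le_ncard hsub ((Set.finite_Iic m).image E)
    have h2 : (E '' Set.Iic m).ncard ≤ (Set.Iic m).ncard :=
      Set.ncard_image_le (Set.finite_Iic m)
    have h3 : (Set.Iic m).ncard = m + 1 := by
      rw [← Finset.coe_Iic, Set.ncard_coe_finset, Nat.card_Iic]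
    have := (h1.trans h2).trans_eq h3
    exact_mod_cast this
  set C : ℕ := ⌈2 / L⌉₊ with hC
  have hLpos : 0 < L := hD
  have hC1 : 1 ≤ C := Nat.one_le_ceil_iff.mpr (by positivity)
  set M : ℕ := max ν0 1 with hM
  have hEub : ∀ m, M ≤ m → E m ≤ C * (m + 1) := by
    intro m hm
    have hEm : ν0 ≤ E m := le_trans (le_trans (le_max_left _ _) hm) hEsm.le_apply
    have hEm1 : 1 ≤ E m := le_trans (le_trans (le_max_right _ _) hm) hEsm.le_apply
    have h1 : L / 2 < u (E m) := hν0 (E m) hEm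
    have hEpos : (0 : ℝ) < (E m : ℝ) := by exact_mod_cast hEm1
    have h2 : L / 2 * (E m : ℝ) < ((D ∩ Set.Icc 1 (E m)).ncard : ℝ) :=
      (lt_div_iff₀ hEpos).mp h1
    have h3 : L / 2 * (E m : ℝ) < (m : ℝ) + 1 := h2.trans_le (hcount m)
    have h5 : (2 / L : ℝ) ≤ (C : ℝ) := Nat.le_ceil _
    have h5' : (2 : ℝ) ≤ (C : ℝ) * L := by
      rw [div_le_iff₀ hLpos] at h5; linarith
    have h7 : (E m : ℝ) * L < ((C : ℝ) * ((m : ℝ) + 1)) * L := by nlinarith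
    have h8 : (E m : ℝ) < (C : ℝ) * ((m : ℝ) + 1) :=
      lt_of_mul_lt_mul_right (by linarith) hLpos.le
    have h6 : (E m : ℝ) ≤ ((C * (m + 1) : ℕ) : ℝ) := by push_cast; linarith
    exact_mod_cast h6
  -- transfer summability along E
  have h1 : Summable fun m : ℕ => ((nthPrime (E m) : ℕ) : ℝ)⁻¹ := by
    have hinj : Function.Injective fun m : ℕ => (⟨E m, hEmem m⟩ : D) := fun a b h =>
      hEsm.injective (congrArg Subtype.val h)
    simpa [Function.comp_def] using hsum.comp_injective hinj
  have h1' : Summable fun m : ℕ => ((Nat.nth Nat.Prime (E m - 1) : ℕ) : ℝ)⁻¹ := by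
    simpa only [nthPrime] using h1
  have h2 : Summable fun m : ℕ => ((Nat.nth Nat.Prime (C * (m + (M + 1))) : ℕ) : ℝ)⁻¹ := by
    have hs : Summable fun m : ℕ => ((Nat.nth Nat.Prime (E (m + M) - 1) : ℕ) : ℝ)⁻¹ :=
      (summable_nat_add_iff M).mpr h1'
    refine hs.of_nonneg_of_le (fun m => by positivity) (fun m => ?_)
    have hidx : E (m + M) - 1 ≤ C * (m + (M + 1)) := by
      have h := hEub (m + M) (Nat.le_add_left M m)
      exact le_trans (Nat.sub_le _ _) (h.trans_eq (by ring))
    have hmono : Nat.nth Nat.Prime (E (m + M) - 1) ≤ Nat.nth Nat.Prime (C * (m + (M + 1))) :=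
      Nat.nth_monotone Nat.infinite_setOf_prime hidx
    have hpos : (0 : ℝ) < ((Nat.nth Nat.Prime (E (m + M) - 1) : ℕ) : ℝ) := by
      exact_mod_cast (Nat.prime_nth_prime _).pos
    exact inv_anti₀ hpos (by exact_mod_cast hmono)
  exact aux_not_summable_nth_mul C hC1
    ((summable_nat_add_iff
      (f := fun m => ((Nat.nth Nat.Prime (C * m) : ℕ) : ℝ)⁻¹) (M + 1)).mp h2)

lemma aux_nthPrime_lb {j : ℕ} (hj : 1 ≤ j) : j + 1 ≤ nthPrime j := by
  have := Nat.add_two_le_nth_prime (j - 1)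
  unfold nthPrime
  omega

lemma aux_summable_shift (s : ℝ) (hs : 1 < s) :
    Summable fun j : ℕ => ((j : ℝ) + 1) ^ (-s) := by
  have h : Summable fun n : ℕ => ((n : ℝ)) ^ (-s) :=
    Real.summable_nat_rpow.mpr (by linarith)
  have h2 := (summable_nat_add_iff 1).mpr h
  exact h2.congr fun n => by push_cast; ring_nf


/-- **Knots of degree ≥ 2 have Dirichlet density 0.**
Let `n ≥ 1`, let `J : ℕ → {1,2,…}` have all fibers of at most `n` elements, and
let `d : ℕ → {1,2,…}`.  Set `N(k) = p_{J(k)}^{d(k)}`.  Suppose the set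
`D = {j : ∃ k, J(k) = j ∧ d(k) = 1}` has positive lower natural density.  Then
for each `s > 1` the series `Σ_k N(k)^{−s}` converges, it tends to `∞` as
`s → 1⁺`, and `(Σ_{k : d(k) ≥ 2} N(k)^{−s})/(Σ_k N(k)^{−s}) → 0` as `s → 1⁺`. -/
theorem stmt6 (n : ℕ) (hn : 1 ≤ n) (J d : ℕ → ℕ)
    (hJ : ∀ k, 1 ≤ J k) (hd : ∀ k, 1 ≤ d k)
    (hfib : ∀ j : ℕ, {k : ℕ | J k = j}.Finite ∧ {k : ℕ | J k = j}.ncard ≤ n)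
    (hD : 0 < Filter.liminf
      (fun ν : ℕ =>
        ((({j : ℕ | ∃ k, J k = j ∧ d k = 1}) ∩ Set.Icc 1 ν).ncard : ℝ) / ν)
      Filter.atTop) :
    (∀ s : ℝ, 1 < s →
      Summable (fun k : ℕ => ((nthPrime (J k) ^ d k : ℕ) : ℝ) ^ (-s))) ∧
    Filter.Tendsto
      (fun s : ℝ => ∑' k : ℕ, ((nthPrime (J k) ^ d k : ℕ) : ℝ) ^ (-s))
      (nhdsWithin 1 (Set.Ioi 1)) Filter.atTop ∧
    Filter.Tendsto
      (fun s : ℝ =>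
        (∑' k : ℕ, if 2 ≤ d k then ((nthPrime (J k) ^ d k : ℕ) : ℝ) ^ (-s) else 0) /
        (∑' k : ℕ, ((nthPrime (J k) ^ d k : ℕ) : ℝ) ^ (-s)))
      (nhdsWithin 1 (Set.Ioi 1)) (nhds 0) := by
  classical
  have hNpos : ∀ k, (0 : ℝ) < ((nthPrime (J k) ^ d k : ℕ) : ℝ) := by
    intro k
    have h1 : 1 ≤ nthPrime (J k) ^ d k :=
      Nat.one_le_pow _ _ (by have := aux_nthPrime_lb (hJ k); omega)
    exact_mod_cast h1
  have hNlb : ∀ k, J k + 1 ≤ nthPrime (J k) ^ d k := by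
    intro k
    exact (aux_nthPrime_lb (hJ k)).trans
      (Nat.le_self_pow (by have := hd k; omega) _)
  -- Part 1 : summability
  have part1 : ∀ s : ℝ, 1 < s →
      Summable (fun k : ℕ => ((nthPrime (J k) ^ d k : ℕ) : ℝ) ^ (-s)) := by
    intro s hs
    have hbase : Summable fun k : ℕ => ((J k : ℝ) + 1) ^ (-s) :=
      aux_summable_comp (f := fun j : ℕ => ((j : ℝ) + 1) ^ (-s)) hfib
        (fun j => Real.rpow_nonneg (by positivity) _) (aux_summable_shift s hs)
    refine Summable.of_nonneg_of_le
      (fun k => Real.rpow_nonneg (hNpos k).le _) (fun k => ?_) hbase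
    refine Real.rpow_le_rpow_of_nonpos (by positivity) ?_ (by linarith)
    exact_mod_cast hNlb k
  -- divergence of the sum of inverses
  have hns : ¬ Summable fun k : ℕ => ((nthPrime (J k) ^ d k : ℕ) : ℝ)⁻¹ := by
    intro hsum
    have hinj : Function.Injective
        (fun j : {j : ℕ | ∃ k, J k = j ∧ d k = 1} => (j.prop.choose : ℕ)) := by
      intro a b hab
      apply Subtype.ext
      have ha := a.prop.choose_spec
      have hb := b.prop.choose_spec
      rw [← ha.1, ← hb.1]
      exact congrArg J hab
    have hsum2 : Summable
        fun j : {j : ℕ | ∃ k, J k = j ∧ d k = 1} => ((nthPrime (j : ℕ) : ℕ) : ℝ)⁻¹ := by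
      refine (hsum.comp_injective hinj).congr fun j => ?_
      have hj := j.prop.choose_spec
      simp only [Function.comp_apply, hj.1, hj.2, pow_one]
    exact aux_density_not_summable hD hsum2
  -- Part 2 : divergence as s → 1⁺
  have part2 : Filter.Tendsto
      (fun s : ℝ => ∑' k : ℕ, ((nthPrime (J k) ^ d k : ℕ) : ℝ) ^ (-s))
      (nhdsWithin 1 (Set.Ioi 1)) Filter.atTop := by
    rw [Filter.tendsto_atTop]
    intro Cb
    have hps := (not_summable_iff_tendsto_nat_atTop_of_nonneg
      (fun k => by positivity)).mp hns
    obtain ⟨m, hm⟩ := (hps.eventually_ge_atTop (Cb + 1)).exists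
    have hcont : Continuous
        (fun s : ℝ => ∑ k ∈ Finset.range m, ((nthPrime (J k) ^ d k : ℕ) : ℝ) ^ (-s)) := by
      refine continuous_finset_sum _ fun k _ => ?_
      have hx := hNpos k
      have heq : (fun s : ℝ => ((nthPrime (J k) ^ d k : ℕ) : ℝ) ^ (-s))
          = fun s : ℝ => Real.exp (Real.log ((nthPrime (J k) ^ d k : ℕ) : ℝ) * (-s)) := by
        funext s
        rw [Real.rpow_def_of_pos hx]
      rw [heq]
      exact Real.continuous_exp.comp (continuous_const.mul continuous_neg)
    have hval : ∑ k ∈ Finset.range m, ((nthPrime (J k) ^ d k : ℕ) : ℝ) ^ (-(1:ℝ))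
        = ∑ k ∈ Finset.range m, ((nthPrime (J k) ^ d k : ℕ) : ℝ)⁻¹ := by
      refine Finset.sum_congr rfl fun k _ => ?_
      rw [Real.rpow_neg_one]
    have htd := (hcont.continuousAt (x := (1:ℝ))).tendsto.mono_left
      (nhdsWithin_le_nhds (s := Set.Ioi (1:ℝ)))
    have hgt : Cb < ∑ k ∈ Finset.range m, ((nthPrime (J k) ^ d k : ℕ) : ℝ) ^ (-(1:ℝ)) := by
      rw [hval]; linarith [hm]
    have hev1 := htd.eventually (eventually_gt_nhds hgt)
    filter_upwards [hev1, self_mem_nhdsWithin] with s hs1 hs2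
    have hsgt : (1:ℝ) < s := hs2
    calc Cb ≤ ∑ k ∈ Finset.range m, ((nthPrime (J k) ^ d k : ℕ) : ℝ) ^ (-s) := hs1.le
      _ ≤ ∑' k : ℕ, ((nthPrime (J k) ^ d k : ℕ) : ℝ) ^ (-s) :=
          Summable.sum_le_tsum _ (fun k _ => by positivity) (part1 s hsgt)
  refine ⟨part1, part2, ?_⟩
  -- Part 3 : ratio tends to 0
  have hBsum : Summable fun k : ℕ => ((J k : ℝ) + 1) ^ (-(2:ℝ)) :=
    aux_summable_comp (f := fun j : ℕ => ((j : ℝ) + 1) ^ (-(2:ℝ))) hfib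
      (fun j => Real.rpow_nonneg (by positivity) _) (aux_summable_shift 2 one_lt_two)
  set B : ℝ := ∑' k : ℕ, ((J k : ℝ) + 1) ^ (-(2:ℝ)) with hB
  have hnum_le : ∀ s : ℝ, 1 < s →
      (∑' k : ℕ, if 2 ≤ d k then ((nthPrime (J k) ^ d k : ℕ) : ℝ) ^ (-s) else 0) ≤ B := by
    intro s hs
    have hterm : ∀ k : ℕ,
        (if 2 ≤ d k then ((nthPrime (J k) ^ d k : ℕ) : ℝ) ^ (-s) else 0)
        ≤ ((J k : ℝ) + 1) ^ (-(2:ℝ)) := by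
      intro k
      by_cases h2 : 2 ≤ d k
      · simp only [if_pos h2]
        have hx1 : (1:ℝ) ≤ (J k : ℝ) + 1 := by
          have : (0:ℝ) ≤ (J k : ℝ) := Nat.cast_nonneg _
          linarith
        have hlb : ((J k : ℝ) + 1) ^ (2:ℕ) ≤ ((nthPrime (J k) ^ d k : ℕ) : ℝ) := by
          have h1 : (J k + 1) ^ 2 ≤ nthPrime (J k) ^ d k := by
            calc (J k + 1) ^ 2 ≤ nthPrime (J k) ^ 2 :=
                  Nat.pow_le_pow_left (aux_nthPrime_lb (hJ k)) 2
              _ ≤ nthPrime (J k) ^ d k :=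
                  Nat.pow_le_pow_right (by have := aux_nthPrime_lb (hJ k); omega) h2
          exact_mod_cast h1
        calc ((nthPrime (J k) ^ d k : ℕ) : ℝ) ^ (-s)
            ≤ (((J k : ℝ) + 1) ^ (2:ℕ)) ^ (-s) :=
              Real.rpow_le_rpow_of_nonpos (by positivity) hlb (by linarith)
          _ = ((J k : ℝ) + 1) ^ ((2:ℝ) * (-s)) := by
              rw [← Real.rpow_natCast ((J k : ℝ) + 1) 2,
                ← Real.rpow_mul (by positivity)]
              norm_num
          _ ≤ ((J k : ℝ) + 1) ^ (-(2:ℝ)) :=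
              Real.rpow_le_rpow_of_exponent_le hx1 (by linarith)
      · simp only [if_neg h2]
        positivity
    have hnumsum : Summable
        (fun k : ℕ => if 2 ≤ d k then ((nthPrime (J k) ^ d k : ℕ) : ℝ) ^ (-s) else 0) := by
      refine Summable.of_nonneg_of_le (fun k => ?_) (fun k => ?_) (part1 s hs)
      · by_cases h2 : 2 ≤ d k <;> simp [h2] <;> positivity
      · by_cases h2 : 2 ≤ d k <;> simp [h2] <;> positivity
    exact Summable.tsum_le_tsum hterm hnumsum hBsum
  have hevpos : ∀ᶠ s in nhdsWithin 1 (Set.Ioi (1:ℝ)),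
      1 ≤ ∑' k : ℕ, ((nthPrime (J k) ^ d k : ℕ) : ℝ) ^ (-s) :=
    part2.eventually_ge_atTop 1
  refine tendsto_of_tendsto_of_tendsto_of_le_of_le' tendsto_const_nhds
    (Filter.Tendsto.div_atTop (tendsto_const_nhds (x := B)) part2) ?_ ?_
  · filter_upwards [hevpos, self_mem_nhdsWithin] with s h1 hs2
    refine div_nonneg (tsum_nonneg fun k => ?_) (by linarith)
    by_cases h2 : 2 ≤ d k <;> simp [h2] <;> positivity
  · filter_upwards [hevpos, self_mem_nhdsWithin] with s h1 hs2
    have hsgt : (1:ℝ) < s := hs2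
    exact div_le_div_of_nonneg_right (hnum_le s hsgt) (by linarith)
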